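/- For the d = 1 fluid Tangle model with constant arrival rate a(t) = 1, the unique time-independent solution is l = 2h, x = h, w = h, and it is locally stable: every complex z in the spectrum of the linearization, i.e., every solution of 1 + hz = (1/2)e^{-zh}, has negative real part. -/

import Mathlib

/-- For d = 1 and arrival rate 1, the unique static fluid solution is l = 2h, x = h,
w = h, and it is locally stable: every root of 1 + hz = (1/2) e^{-zh} has Re(z) < 0. -/
theorem single_type_static_solution_stable
    (h : ℝ) (hh : 0 < h) :
    (∀ l x w : ℝ, 0 < l → (l ^ 2 = 2 * x * l) → (l - x = h * (2 * x * l) / l ^ 2) →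
      w = l - x → l = 2 * h ∧ x = h ∧ w = h) ∧
    (∀ z : ℂ, 1 + (h : ℂ) * z = (1 / 2) * Complex.exp (-z * h) → z.re < 0) := by
  constructor
  · intro l x w hl h1 h2 h3
    have hl2 : l = 2 * x := by
      have := mul_right_cancel₀ (ne_of_gt hl) (by linarith [sq l] : l * l = (2*x) * l)
      linarith
    have hx0 : x ≠ 0 := by intro h0; rw [hl2, h0] at hl; simp at hl
    have hx : l - x = h := by
      rw [h2, hl2]
      field_simp
    refine ⟨by linarith, by linarith, by linarith⟩
  · intro z hz
    by_contra hre
    push_neg at hre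
    have h1 : (1:ℝ) ≤ (1 + (h:ℂ) * z).re := by
      simp [Complex.add_re, Complex.mul_re]
      nlinarith
    have h2 : ((1:ℝ)) ≤ ‖1 + (h:ℂ) * z‖ :=
      le_trans h1 (Complex.re_le_norm _)
    have h3 : ‖1 + (h:ℂ) * z‖ ≤ 1/2 := by
      rw [hz]
      rw [norm_mul, Complex.norm_exp]
      have : (-z * (h:ℂ)).re = -(z.re * h) := by simp [Complex.mul_re]
      rw [this]
      have he : Real.exp (-(z.re * h)) ≤ 1 := by
        rw [Real.exp_le_one_iff]
        nlinarith
      have : ‖(1/2 : ℂ)‖ = 1/2 := by norm_num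
      nlinarith [Real.exp_pos (-(z.re * h))]
    linarith
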